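/- There exists a probability space carrying random variables A₁, A₂, B₁, B₂, C₂, each taking values in {−1, 1} almost surely, such that: E[A₁] = E[A₂] = E[B₁] = E[B₂] = E[C₂] = 0; E[A_iB_j] = 0, E[A_iC₂] = 0 and E[B_iC₂] = 0 for all i, j ∈ {1,2}; E[A₂B₁C₂] = −1 and E[A₁B₂C₂] = 1; and E[A₂B₂C₂] = 0 and E[A₁B₁C₂] = 0. -/

import Mathlib

open MeasureTheory

noncomputable def ghszSign (b : Bool) : ℝ := if b then 1 else -1

theorem stmt_16 :
    ∃ (Ω : Type) (_ : MeasurableSpace Ω) (μ : Measure Ω) (A₁ A₂ B₁ B₂ C₂ : Ω → ℝ),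
      IsProbabilityMeasure μ ∧
      Measurable A₁ ∧ Measurable A₂ ∧ Measurable B₁ ∧ Measurable B₂ ∧ Measurable C₂ ∧
      (∀ᵐ ω ∂μ, A₁ ω = -1 ∨ A₁ ω = 1) ∧ (∀ᵐ ω ∂μ, A₂ ω = -1 ∨ A₂ ω = 1) ∧
      (∀ᵐ ω ∂μ, B₁ ω = -1 ∨ B₁ ω = 1) ∧ (∀ᵐ ω ∂μ, B₂ ω = -1 ∨ B₂ ω = 1) ∧
      (∀ᵐ ω ∂μ, C₂ ω = -1 ∨ C₂ ω = 1) ∧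
      (∫ ω, A₁ ω ∂μ = 0) ∧ (∫ ω, A₂ ω ∂μ = 0) ∧ (∫ ω, B₁ ω ∂μ = 0) ∧
      (∫ ω, B₂ ω ∂μ = 0) ∧ (∫ ω, C₂ ω ∂μ = 0) ∧
      (∫ ω, A₁ ω * B₁ ω ∂μ = 0) ∧ (∫ ω, A₁ ω * B₂ ω ∂μ = 0) ∧
      (∫ ω, A₂ ω * B₁ ω ∂μ = 0) ∧ (∫ ω, A₂ ω * B₂ ω ∂μ = 0) ∧
      (∫ ω, A₁ ω * C₂ ω ∂μ = 0) ∧ (∫ ω, A₂ ω * C₂ ω ∂μ = 0) ∧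
      (∫ ω, B₁ ω * C₂ ω ∂μ = 0) ∧ (∫ ω, B₂ ω * C₂ ω ∂μ = 0) ∧
      (∫ ω, A₂ ω * B₁ ω * C₂ ω ∂μ = -1) ∧ (∫ ω, A₁ ω * B₂ ω * C₂ ω ∂μ = 1) ∧
      (∫ ω, A₂ ω * B₂ ω * C₂ ω ∂μ = 0) ∧ (∫ ω, A₁ ω * B₁ ω * C₂ ω ∂μ = 0) := by
  set μ : Measure (Bool × Bool × Bool) := (8 : ENNReal)⁻¹ • Measure.count with hμdef
  have hμ : IsProbabilityMeasure μ := by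
    constructor
    rw [hμdef, Measure.smul_apply, Measure.count_univ]
    norm_num
    exact ENNReal.inv_mul_cancel (by norm_num) (by norm_num)
  haveI := hμ
  refine ⟨Bool × Bool × Bool, inferInstance, μ,
    fun ω => ghszSign ω.1, fun ω => ghszSign ω.2.1,
    fun ω => -(ghszSign ω.2.1 * ghszSign ω.2.2),
    fun ω => ghszSign ω.1 * ghszSign ω.2.2,
    fun ω => ghszSign ω.2.2, hμ,
    measurable_of_finite _, measurable_of_finite _, measurable_of_finite _,
    measurable_of_finite _, measurable_of_finite _,
    ?_, ?_, ?_, ?_, ?_, ?_, ?_, ?_, ?_, ?_, ?_, ?_, ?_, ?_, ?_, ?_, ?_, ?_, ?_, ?_, ?_, ?_⟩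
  all_goals first
  | (apply ae_of_all; rintro ⟨a, b, c⟩; cases a <;> cases b <;> cases c <;> simp [ghszSign])
  | (rw [MeasureTheory.integral_fintype (Integrable.of_finite)]
     simp only [hμdef, Measure.real, Measure.smul_apply, Measure.count_singleton, Fintype.sum_prod_type,
       Fintype.sum_bool, smul_eq_mul, ghszSign]
     norm_num)
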